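/- For all integers m ≥ 1, ℓ ∈ ℤ, and every natural number n, one has ∑_{j=0}^{⌊m/2⌋} (−1)^j · (C(m−j, j) + C(m−1−j, j−1)) · A_{n+m−2j}(2, 2m, ℓ, −1) = 0, where C(m−j,j) + C(m−1−j,j−1) = (m/(m−j))·C(m−j,j) is the j-th Lucas coefficient (with C(·, −1) = 0). Equivalently, L_m(N, −1)·A_n(2, 2m, ℓ, −1) = 0 where N is the shift operator N·A_n = A_{n+1} and L_m denotes the Lucas polynomial. -/

import Mathlib

open Finset Polynomial

/-- Binomial coefficient `C(a, r)` with integer lower index, equal to `0` for `r < 0`. -/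
noncomputable def Cz (a : ℕ) (r : ℤ) : ℝ :=
  if 0 ≤ r then (a.choose r.toNat : ℝ) else 0

/-- `A n (k, m, ℓ, z) = ∑_{h ∈ ℤ} C(n, ⌊(n + m h + ℓ)/k⌋) z^h`. -/
noncomputable def A (k m : ℕ) (l : ℤ) (z : ℝ) (n : ℕ) : ℝ :=
  ∑ᶠ h : ℤ, Cz n (((n : ℤ) + m * h + l).fdiv k) * z ^ h

/-- antiperiodic character: `(-1)^(t/m)` if `m ∣ t`, else `0`. -/
noncomputable def chi (m : ℕ) (t : ℤ) : ℝ :=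
  if (m : ℤ) ∣ t then (-1 : ℝ) ^ (t.fdiv m) else 0

lemma chi_add (m : ℕ) (hm : 1 ≤ m) (t : ℤ) : chi m (t + m) = - chi m t := by
  have hm0 : (m : ℤ) ≠ 0 := by exact_mod_cast Nat.one_le_iff_ne_zero.mp hm
  unfold chi
  have hdvd : ((m : ℤ) ∣ t + m) ↔ ((m : ℤ) ∣ t) := by
    constructor
    · intro h; simpa using h.sub (dvd_refl (m : ℤ))
    · intro h; exact h.add (dvd_refl _)
  by_cases h : (m : ℤ) ∣ t
  · rw [if_pos (hdvd.mpr h), if_pos h]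
    have : (t + m).fdiv m = t.fdiv m + 1 := by
      rw [Int.fdiv_eq_ediv_of_nonneg _ (by positivity), Int.fdiv_eq_ediv_of_nonneg _ (by positivity)]
      have := Int.add_mul_ediv_right t 1 hm0
      simpa using this
    rw [this, zpow_add_one₀ (by norm_num : (-1:ℝ) ≠ 0)]
    ring
  · rw [if_neg (fun hc => h (hdvd.mp hc)), if_neg h, neg_zero]

/-- `W`: binomial-weighted sum of `chi` values. -/
noncomputable def Wn (m n : ℕ) (c : ℤ) : ℝ :=
  ∑ q ∈ range (n + 1), (n.choose q : ℝ) * chi m ((q : ℤ) + c)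

/-- Pascal splitting of a binomially weighted sum. -/
lemma choose_sum_succ (d : ℕ) (g : ℕ → ℝ) :
    ∑ a ∈ range (d + 2), ((d + 1).choose a : ℝ) * g a
      = ∑ a ∈ range (d + 1), (d.choose a : ℝ) * g a
        + ∑ a ∈ range (d + 1), (d.choose a : ℝ) * g (a + 1) := by
  rw [Finset.sum_range_succ' (fun a => ((d + 1).choose a : ℝ) * g a) (d + 1)]
  have h1 : ∀ i, (((d + 1).choose (i + 1) : ℕ) : ℝ) = (d.choose i : ℝ) + (d.choose (i+1) : ℝ) := by
    intro i; rw [Nat.choose_succ_succ]; push_cast; ring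
  calc (∑ i ∈ range (d + 1), ((d + 1).choose (i + 1) : ℝ) * g (i + 1))
        + ((d + 1).choose 0 : ℝ) * g 0
      = (∑ i ∈ range (d + 1), ((d.choose i : ℝ) * g (i+1) + (d.choose (i+1) : ℝ) * g (i + 1)))
        + g 0 := by
        simp only [Nat.choose_zero_right, Nat.cast_one, one_mul]
        congr 1
        refine Finset.sum_congr rfl fun i _ => ?_
        rw [h1]; ring
    _ = ∑ i ∈ range (d + 1), (d.choose i : ℝ) * g (i+1)
        + ((∑ i ∈ range (d + 1), (d.choose (i+1) : ℝ) * g (i + 1)) + g 0) := by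
        rw [Finset.sum_add_distrib]; ring
    _ = ∑ i ∈ range (d + 1), (d.choose i : ℝ) * g (i+1)
        + ∑ a ∈ range (d + 1), (d.choose a : ℝ) * g a := by
        congr 1
        rw [Finset.sum_range_succ (fun i => (d.choose (i+1) : ℝ) * g (i + 1)) d]
        simp only [Nat.choose_succ_self, Nat.cast_zero, zero_mul, add_zero]
        rw [Finset.sum_range_succ' (fun a => (d.choose a : ℝ) * g a) d]
        simp
    _ = _ := by ring

lemma Wn_succ (m n : ℕ) (c : ℤ) : Wn m (n + 1) c = Wn m n c + Wn m n (c + 1) := by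
  unfold Wn
  have := choose_sum_succ n (fun a => chi m ((a : ℤ) + c))
  rw [this]
  congr 1
  refine Finset.sum_congr rfl fun a _ => ?_
  congr 1
  push_cast
  ring

lemma Wn_add (m n : ℕ) (d : ℕ) (c : ℤ) :
    Wn m (n + d) c = ∑ a ∈ range (d + 1), (d.choose a : ℝ) * Wn m n (c + a) := by
  induction d generalizing c with
  | zero => simp
  | succ d ih =>
      have : n + (d + 1) = (n + d) + 1 := by ring
      rw [this, Wn_succ, ih c, ih (c + 1)]
      rw [choose_sum_succ d (fun a => Wn m n (c + a))]
      congr 1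
      refine Finset.sum_congr rfl fun a _ => ?_
      congr 2
      push_cast
      ring

lemma Cz_ne_zero {N : ℕ} {r : ℤ} (h : Cz N r ≠ 0) : 0 ≤ r ∧ r ≤ N := by
  unfold Cz at h
  by_cases h0 : 0 ≤ r
  · rw [if_pos h0] at h
    refine ⟨h0, ?_⟩
    by_contra hc
    push_neg at hc
    have : N < r.toNat := by omega
    rw [Nat.choose_eq_zero_of_lt this] at h
    simp at h
  · rw [if_neg h0] at h; simp at h

/-- Rewriting `A` with `k = 2`, period `2m`, `z = -1` as a `Wn` sum. -/
lemma A_eq (m : ℕ) (hm : 1 ≤ m) (l : ℤ) (N : ℕ) :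
    A 2 (2 * m) l (-1) N = Wn m N (-(((N : ℤ) + l).fdiv 2)) := by
  have hm0 : (m : ℤ) ≠ 0 := by exact_mod_cast Nat.one_le_iff_ne_zero.mp hm
  set r0 : ℤ := ((N : ℤ) + l).fdiv 2 with hr0
  have hfd : ∀ h : ℤ, (((N : ℤ) + (2 * m : ℕ) * h + l).fdiv 2) = r0 + m * h := by
    intro h
    have : ((N : ℤ) + (2 * m : ℕ) * h + l) = ((N : ℤ) + l) + (m * h) * 2 := by push_cast; ring
    rw [this, Int.fdiv_eq_ediv_of_nonneg _ (by norm_num), Int.add_mul_ediv_right _ _ (by norm_num : (2:ℤ) ≠ 0),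
      hr0, Int.fdiv_eq_ediv_of_nonneg _ (by norm_num)]
  unfold A
  simp only [Nat.cast_ofNat]
  have heq : (fun h : ℤ => Cz N (((N : ℤ) + (2 * m : ℕ) * h + l).fdiv 2) * (-1 : ℝ) ^ h)
      = fun h : ℤ => Cz N (r0 + m * h) * (-1 : ℝ) ^ h := by
    funext h; rw [hfd h]
  rw [heq]
  set T : Finset ℤ := Finset.Icc (-(N + r0.natAbs : ℤ)) ((N + r0.natAbs : ℤ)) with hT
  have hsupp : Function.support (fun h : ℤ => Cz N (r0 + m * h) * (-1 : ℝ) ^ h) ⊆ ↑T := by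
    intro h hh
    have hne : Cz N (r0 + m * h) ≠ 0 := by
      intro hc
      apply hh
      simp [hc]
    obtain ⟨h1, h2⟩ := Cz_ne_zero hne
    have hb : (m : ℤ) * h.natAbs = ((m : ℤ) * h).natAbs := by
      rw [Int.natAbs_mul]; push_cast; simp
    have hmh : ((m : ℤ) * h).natAbs ≤ N + r0.natAbs := by omega
    have habs : (h.natAbs : ℤ) ≤ ((m : ℤ) * h).natAbs := by
      rw [← hb]
      nlinarith [h.natAbs.cast_nonneg (α := ℤ), (by exact_mod_cast hm : (1:ℤ) ≤ (m:ℤ))]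
    simp only [hT, Finset.coe_Icc, Set.mem_Icc]
    omega
  rw [finsum_eq_sum_of_support_subset _ hsupp]
  unfold Wn
  have hkey : ∀ h : ℤ, Cz N (r0 + m * h) * (-1 : ℝ) ^ h ≠ 0 →
      0 ≤ r0 + m * h ∧ r0 + m * h ≤ N := by
    intro h hne
    refine Cz_ne_zero (fun hc => hne ?_)
    rw [hc, zero_mul]
  have hshrink : ∀ h : ℤ, 0 ≤ r0 + m * h → r0 + m * h ≤ N → h ∈ T := by
    intro h ha hb
    have hnab : (m : ℤ) * h.natAbs = ((m : ℤ) * h).natAbs := by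
      rw [Int.natAbs_mul]; push_cast; simp
    have hmh : (((m : ℤ) * h).natAbs : ℤ) ≤ (N : ℤ) + r0.natAbs := by omega
    have habs : (h.natAbs : ℤ) ≤ ((m : ℤ) * h).natAbs := by
      rw [← hnab]
      nlinarith [(h.natAbs.cast_nonneg : (0:ℤ) ≤ (h.natAbs : ℤ)),
        (by exact_mod_cast hm : (1:ℤ) ≤ (m:ℤ))]
    simp only [hT, Finset.mem_Icc]
    omega
  refine Finset.sum_bij_ne_zero (fun h _ _ => (r0 + m * h).toNat) ?_ ?_ ?_ ?_
  · intro h h1 h2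
    obtain ⟨ha, hb⟩ := hkey h h2
    simp only [Finset.mem_range]
    omega
  · intro a h1a h2a b h1b h2b hab
    obtain ⟨ha, _⟩ := hkey a h2a
    obtain ⟨hb, _⟩ := hkey b h2b
    have h1 : r0 + (m:ℤ) * a = r0 + m * b := by omega
    have h2 : (m : ℤ) * a = m * b := by omega
    exact mul_left_cancel₀ hm0 h2
  · intro q hq hgq
    have hchi : chi m ((q : ℤ) + -r0) ≠ 0 := by
      intro hc; apply hgq; rw [hc, mul_zero]
    have hch : (N.choose q : ℝ) ≠ 0 := by
      intro hc; apply hgq; rw [hc, zero_mul]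
    have hdvd : (m : ℤ) ∣ ((q : ℤ) + -r0) := by
      by_contra hc; apply hchi; unfold chi; rw [if_neg hc]
    obtain ⟨h, hh⟩ := hdvd
    have hq' : r0 + (m:ℤ) * h = q := by omega
    have hqN : (q : ℤ) ≤ N := by
      simp only [Finset.mem_range] at hq
      omega
    have hCz : Cz N (r0 + (m:ℤ) * h) = (N.choose q : ℝ) := by
      unfold Cz
      rw [hq', if_pos (by positivity : (0:ℤ) ≤ (q:ℤ))]
      simp
    refine ⟨h, hshrink h (by omega) (by omega), ?_, ?_⟩
    · rw [hCz]
      exact mul_ne_zero hch (zpow_ne_zero h (by norm_num : (-1:ℝ) ≠ 0))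
    · omega
  · intro h h1 h2
    obtain ⟨ha, hb⟩ := hkey h h2
    have htn : (((r0 + m * h).toNat : ℤ)) = r0 + m * h := Int.toNat_of_nonneg ha
    have hc : chi m (((r0 + m * h).toNat : ℤ) + -r0) = (-1 : ℝ) ^ h := by
      unfold chi
      rw [htn]
      have harg : r0 + (m : ℤ) * h + -r0 = m * h := by ring
      rw [harg, if_pos ⟨h, rfl⟩, Int.mul_fdiv_cancel_left _ hm0]
    rw [hc]
    unfold Cz
    rw [if_pos ha]

/-- Lucas coefficient. -/
noncomputable def cc (m j : ℕ) : ℝ :=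
  ((m - j).choose j : ℝ) + Cz (m - 1 - j) ((j : ℤ) - 1)

lemma cc_zero (m : ℕ) : cc m 0 = 1 := by
  simp [cc, Cz]

lemma cc_succ (m i : ℕ) : cc m (i + 1) = ((m - (i+1)).choose (i+1) : ℝ) + ((m - 1 - (i+1)).choose i : ℝ) := by
  unfold cc Cz
  rw [if_pos (by omega : (0:ℤ) ≤ ((i+1 : ℕ) : ℤ) - 1)]
  have h : (((i+1 : ℕ) : ℤ) - 1).toNat = i := by omega
  rw [h]

lemma cc_top (m : ℕ) (hm : 2 ≤ m) : cc m (m / 2 + 1) = 0 := by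
  rw [cc_succ]
  have h1 : (m - (m/2 + 1)).choose (m/2 + 1) = 0 := Nat.choose_eq_zero_of_lt (by omega)
  have h2 : (m - 1 - (m/2 + 1)).choose (m/2) = 0 := Nat.choose_eq_zero_of_lt (by omega)
  rw [h1, h2]; norm_num

lemma cc_rec (m i : ℕ) (hm : 1 ≤ m) (hi : i ≤ m / 2) :
    cc (m + 2) (i + 1) = cc (m + 1) (i + 1) + cc m i := by
  obtain ⟨a, ha⟩ : ∃ a, m - i = a := ⟨m - i, rfl⟩
  have hia : m = i + a := by omega
  have hai : i ≤ a := by omega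
  rw [cc_succ, cc_succ]
  have e1 : m + 2 - (i+1) = a + 1 := by omega
  have e2 : m + 2 - 1 - (i+1) = a := by omega
  have e3 : m + 1 - (i+1) = a := by omega
  have e4 : m + 1 - 1 - (i+1) = a - 1 := by omega
  rw [e1, e2, e3, e4]
  -- goal: C(a+1,i+1) + C(a,i) = (C(a,i+1) + C(a-1,i)) + cc m i
  have hP : (a+1).choose (i+1) = a.choose i + a.choose (i+1) := Nat.choose_succ_succ a i
  -- C(a,i) = C(a-1,i) + (if i ≥ 1 then C(a-1,i-1))
  rcases Nat.eq_zero_or_pos i with hi0 | hip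
  · subst hi0
    have hcc : cc m 0 = 1 := cc_zero m
    rw [hcc, hP]
    simp [Nat.choose_zero_right]
    push_cast
    ring
  · obtain ⟨i', rfl⟩ : ∃ i', i = i' + 1 := ⟨i - 1, by omega⟩
    rw [cc_succ]
    have e5 : m - (i' + 1) = a := by omega
    have e6 : m - 1 - (i' + 1) = a - 1 := by omega
    rw [e5, e6]
    have ha1 : a = (a - 1) + 1 := by omega
    have hP2 : a.choose (i' + 1) = (a-1).choose i' + (a-1).choose (i'+1) := by
      conv_lhs => rw [ha1]
      exact Nat.choose_succ_succ (a-1) i'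
    rw [hP, hP2]
    push_cast
    ring

/-- the Lucas-type polynomial. -/
noncomputable def PP (m : ℕ) : Polynomial ℝ :=
  ∑ j ∈ range (m / 2 + 1),
    Polynomial.C ((-1 : ℝ) ^ j * cc m j) * ((X + 1) ^ (m - 2 * j) * X ^ j)

/-- one extra (vanishing) term. -/
lemma PP_ext (m : ℕ) (hm : 2 ≤ m) :
    PP m = ∑ j ∈ range (m / 2 + 2),
      Polynomial.C ((-1 : ℝ) ^ j * cc m j) * ((X + 1) ^ (m - 2 * j) * X ^ j) := by
  rw [Finset.sum_range_succ
    (fun j => Polynomial.C ((-1 : ℝ) ^ j * cc m j) * ((X + 1) ^ (m - 2 * j) * X ^ j)) (m/2+1)]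
  rw [cc_top m hm]
  simp [PP]

lemma PP_succ_ext (m : ℕ) (hm : 1 ≤ m) :
    PP (m + 1) = ∑ j ∈ range (m / 2 + 2),
      Polynomial.C ((-1 : ℝ) ^ j * cc (m+1) j) * ((X + 1) ^ (m + 1 - 2 * j) * X ^ j) := by
  rcases Nat.even_or_odd m with ⟨k, rfl⟩ | ⟨k, rfl⟩
  · have h2 : (k + k + 1)/2 = (k + k)/2 := by omega
    rw [PP_ext (k + k + 1) (by omega), h2]
  · have h2 : (2*k+1+1)/2 + 1 = (2*k+1)/2 + 2 := by omega
    rw [PP, h2]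

lemma PP_rec (m : ℕ) (hm : 1 ≤ m) :
    PP (m + 2) = (X + 1) * PP (m + 1) - X * PP m := by
  have hM2 : (m + 2) / 2 = m / 2 + 1 := by omega
  rw [PP_succ_ext m hm]
  rw [show PP (m+2) = ∑ j ∈ range (m / 2 + 2),
      Polynomial.C ((-1 : ℝ) ^ j * cc (m+2) j) * ((X + 1) ^ (m + 2 - 2 * j) * X ^ j) by
    rw [PP, hM2]]
  rw [PP, Finset.mul_sum, Finset.mul_sum]
  rw [Finset.sum_range_succ' (fun j =>
    Polynomial.C ((-1 : ℝ) ^ j * cc (m+2) j) * ((X + 1) ^ (m + 2 - 2 * j) * X ^ j)) (m/2+1)]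
  rw [Finset.sum_range_succ' (fun j =>
    (X+1) * (Polynomial.C ((-1 : ℝ) ^ j * cc (m+1) j) * ((X + 1) ^ (m + 1 - 2 * j) * X ^ j))) (m/2+1)]
  have hzero : Polynomial.C ((-1 : ℝ) ^ 0 * cc (m+2) 0) * ((X + 1) ^ (m + 2 - 2 * 0) * X ^ 0)
      = (X+1) * (Polynomial.C ((-1 : ℝ) ^ 0 * cc (m+1) 0) * ((X + 1) ^ (m + 1 - 2 * 0) * X ^ 0)) := by
    rw [cc_zero, cc_zero]
    simp only [pow_zero, one_mul, mul_one, map_one, Nat.sub_zero, Nat.mul_zero]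
    rw [show m + 2 = m + 1 + 1 from rfl, pow_succ]
    ring
  rw [hzero]
  have hterm : ∀ i ∈ range (m/2 + 1),
      Polynomial.C ((-1 : ℝ) ^ (i+1) * cc (m+2) (i+1)) * ((X + 1) ^ (m + 2 - 2 * (i+1)) * X ^ (i+1))
        = (X+1) * (Polynomial.C ((-1 : ℝ) ^ (i+1) * cc (m+1) (i+1)) * ((X + 1) ^ (m + 1 - 2 * (i+1)) * X ^ (i+1)))
          - X * (Polynomial.C ((-1 : ℝ) ^ i * cc m i) * ((X + 1) ^ (m - 2 * i) * X ^ i)) := by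
    intro i hi
    simp only [Finset.mem_range] at hi
    have hi' : i ≤ m / 2 := by omega
    rw [cc_rec m i hm hi']
    rcases Nat.lt_or_ge (2 * i) m with hlt | hge
    · set d := m - 2 * i - 1 with hd
      rw [show m + 2 - 2 * (i+1) = d + 1 by omega, show m + 1 - 2 * (i+1) = d by omega,
        show m - 2 * i = d + 1 by omega]
      rw [pow_succ (X + 1 : Polynomial ℝ) d, mul_add]
      simp only [pow_succ, map_add, map_mul, map_neg, map_one]
      ring
    · have heq : 2 * i = m := by omega
      have hceven : cc (m+1) (i+1) = 0 := by
        have h1 : (m+1)/2 + 1 = i + 1 := by omega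
        rw [← h1]
        exact cc_top (m+1) (by omega)
      rw [hceven]
      rw [show m + 2 - 2 * (i+1) = 0 by omega, show m + 1 - 2 * (i+1) = 0 by omega,
        show m - 2 * i = 0 by omega]
      simp only [zero_add, pow_succ, map_mul, map_neg, map_one, pow_zero, map_zero, mul_zero, zero_mul]
      ring
  rw [Finset.sum_congr rfl hterm, Finset.sum_sub_distrib]
  ring

lemma PP_eq : ∀ m : ℕ, 1 ≤ m → PP m = X ^ m + 1
  | 1, _ => by
      rw [PP]
      norm_num [cc_zero]
  | 2, _ => by
      rw [PP]
      rw [show (2:ℕ)/2 + 1 = 2 by norm_num]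
      rw [Finset.sum_range_succ, Finset.sum_range_one]
      rw [cc_zero, cc_succ]
      norm_num [map_ofNat]
      ring
  | (m+3), _ => by
      have h1 := PP_eq (m+1) (by omega)
      have h2 := PP_eq (m+2) (by omega)
      have h3 := PP_rec (m+1) (by omega)
      rw [show m + 3 = (m+1) + 2 by ring] at *
      rw [h3, h1, h2]
      ring

lemma step4 (V : ℤ → ℝ) (c0 : ℤ) (d j m : ℕ) (h : d + j ≤ m) :
    ∑ t ∈ range (m + 1), (((X + 1) ^ d * X ^ j : Polynomial ℝ)).coeff t * V (c0 + t)
      = ∑ a ∈ range (d + 1), (d.choose a : ℝ) * V (c0 + j + a) := by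
  simp only [Polynomial.coeff_mul_X_pow', Polynomial.coeff_X_add_one_pow]
  rw [Finset.range_eq_Ico, ← Finset.sum_Ico_consecutive _ (Nat.zero_le j) (by omega : j ≤ m + 1)]
  have h0 : ∑ t ∈ Finset.Ico 0 j,
      (if j ≤ t then ((d.choose (t - j) : ℝ)) else 0) * V (c0 + t) = 0 := by
    refine Finset.sum_eq_zero fun t ht => ?_
    simp only [Finset.mem_Ico] at ht
    rw [if_neg (by omega)]
    ring
  rw [h0, zero_add, Finset.sum_Ico_eq_sum_range]
  have h1 : ∀ i ∈ range (m + 1 - j),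
      (if j ≤ j + i then ((d.choose (j + i - j) : ℝ)) else 0) * V (c0 + (j + i : ℕ))
        = (d.choose i : ℝ) * V (c0 + j + i) := by
    intro i _
    rw [if_pos (by omega), show j + i - j = i by omega]
    congr 1
    push_cast
    ring
  rw [Finset.sum_congr rfl h1]
  refine (Finset.sum_subset ?_ ?_).symm
  · intro x hx
    simp only [Finset.mem_range, Finset.mem_Ico] at *
    omega
  · intro x _ hx
    simp only [Finset.mem_range, Finset.mem_Ico] at hx
    rw [Nat.choose_eq_zero_of_lt (by omega)]
    ring

theorem stmt12 (m : ℕ) (hm : 1 ≤ m) (l : ℤ) (n : ℕ) :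
    ∑ j ∈ Finset.range (m / 2 + 1), (-1 : ℝ) ^ j *
        (((m - j).choose j : ℝ) + Cz (m - 1 - j) ((j : ℤ) - 1)) *
        A 2 (2 * m) l (-1) (n + m - 2 * j) = 0 := by
  set M := m / 2 with hM
  set n' : ℕ := n + (m - 2 * M) with hn'
  set ρ : ℤ := ((n' : ℤ) + l).fdiv 2 with hρ
  set c0 : ℤ := -ρ - M with hc0
  have key : ∀ j ∈ range (M + 1),
      (-1 : ℝ) ^ j * (((m - j).choose j : ℝ) + Cz (m - 1 - j) ((j : ℤ) - 1)) *
          A 2 (2 * m) l (-1) (n + m - 2 * j)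
        = ((-1 : ℝ) ^ j * cc m j) *
            ∑ t ∈ range (m + 1),
              (((X + 1) ^ (m - 2 * j) * X ^ j : Polynomial ℝ)).coeff t * Wn m n (c0 + t) := by
    intro j hj
    simp only [Finset.mem_range] at hj
    have hjM : j ≤ M := by omega
    have h2j : 2 * j ≤ m := by omega
    rw [A_eq m hm l (n + m - 2 * j)]
    have harg : -((((n + m - 2 * j : ℕ) : ℤ) + l).fdiv 2) = c0 + j := by
      have hsplit : ((n + m - 2 * j : ℕ) : ℤ) + l = ((n' : ℤ) + l) + ((M - j : ℕ) : ℤ) * 2 := by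
        push_cast [hn']
        omega
      rw [hsplit, Int.fdiv_eq_ediv_of_nonneg _ (by norm_num),
        Int.add_mul_ediv_right _ _ (by norm_num : (2:ℤ) ≠ 0), hc0, hρ,
        Int.fdiv_eq_ediv_of_nonneg _ (by norm_num)]
      push_cast
      omega
    rw [harg]
    have hidx : n + m - 2 * j = n + (m - 2 * j) := by omega
    rw [hidx, Wn_add m n (m - 2 * j) (c0 + j)]
    rw [step4 (Wn m n) c0 (m - 2 * j) j m (by omega)]
    rw [cc]
  rw [Finset.sum_congr rfl key]
  have hswap : ∑ j ∈ range (M + 1), ((-1 : ℝ) ^ j * cc m j) *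
        ∑ t ∈ range (m + 1),
          (((X + 1) ^ (m - 2 * j) * X ^ j : Polynomial ℝ)).coeff t * Wn m n (c0 + t)
      = ∑ t ∈ range (m + 1), (PP m).coeff t * Wn m n (c0 + t) := by
    simp only [Finset.mul_sum]
    rw [Finset.sum_comm]
    refine Finset.sum_congr rfl fun t _ => ?_
    rw [PP, Polynomial.finset_sum_coeff, Finset.sum_mul]
    refine Finset.sum_congr rfl fun j _ => ?_
    rw [Polynomial.coeff_C_mul]
    ring
  rw [hswap, PP_eq m hm]
  have hco : ∀ t, ((X ^ m + 1 : Polynomial ℝ)).coeff t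
      = (if t = m then (1:ℝ) else 0) + (if t = 0 then (1:ℝ) else 0) := by
    intro t
    rw [Polynomial.coeff_add, Polynomial.coeff_X_pow, Polynomial.coeff_one]
  simp only [hco]
  simp only [add_mul, Finset.sum_add_distrib, ite_mul, zero_mul, one_mul]
  rw [Finset.sum_ite_eq' (range (m + 1)) m (fun x => Wn m n (c0 + (x : ℤ))),
    Finset.sum_ite_eq' (range (m + 1)) 0 (fun x => Wn m n (c0 + (x : ℤ)))]
  rw [if_pos (by simp : m ∈ range (m + 1)), if_pos (by simp [Nat.lt_succ] : 0 ∈ range (m + 1))]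
  simp only [Nat.cast_zero, add_zero]
  unfold Wn
  rw [← Finset.sum_add_distrib]
  refine Finset.sum_eq_zero fun q _ => ?_
  have h1 : (q : ℤ) + (c0 + m) = ((q : ℤ) + c0) + m := by ring
  rw [h1, chi_add m hm]
  ring
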